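/- Let ξ have density π(x) = c exp(-|x|/2) corresponding to q = 1 in dimension d, with radial tail P(|ξ| > ρ) = (c_d/c_0) ∑_{k=0}^d 2^{k+1} ρ^{d−k} (d choose k) e^{−ρ/2}. Then for all sufficiently large r, P(|ξ| > 2r) ≤ (P(|ξ| > r))². -/

import Mathlib

open Real Finset

/-- q = 1 case of the tail-squaring inequality: with the explicit radial
tail T(ρ) = (c_d/c_0) ∑_{k=0}^d 2^{k+1} ρ^{d−k} (d choose k) e^{−ρ/2}, c_d/c_0 = 2^d,
one has T(2r) ≤ (T r)² for all sufficiently large r. -/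
theorem tail_squaring_q_one
    (d : ℕ) (hd : 1 ≤ d) :
    ∃ r₀ : ℝ, 0 < r₀ ∧ ∀ ρ : ℝ, r₀ ≤ ρ →
      (2 : ℝ) ^ d * ∑ k ∈ Finset.range (d + 1),
          (2 : ℝ) ^ (k + 1) * (2 * ρ) ^ (d - k) * (d.choose k : ℝ) * Real.exp (-(2 * ρ) / 2)
      ≤ ((2 : ℝ) ^ d * ∑ k ∈ Finset.range (d + 1),
          (2 : ℝ) ^ (k + 1) * ρ ^ (d - k) * (d.choose k : ℝ) * Real.exp (-ρ / 2)) ^ 2 := by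
  refine ⟨2, by norm_num, fun ρ hρ => ?_⟩
  have hρ1 : (1:ℝ) ≤ ρ := by linarith
  have hρ0 : (0:ℝ) < ρ := by linarith
  set E := Real.exp (-ρ/2) with hE
  have hEpos : 0 < E := Real.exp_pos _
  have hexp : Real.exp (-(2*ρ)/2) = E^2 := by
    rw [hE, sq, ← Real.exp_add]; ring_nf
  set A := ∑ k ∈ Finset.range (d + 1),
      (2:ℝ)^(k+1) * (2*ρ)^(d-k) * (d.choose k : ℝ) with hA
  set S := ∑ k ∈ Finset.range (d + 1),
      (2:ℝ)^(k+1) * ρ^(d-k) * (d.choose k : ℝ) with hS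
  have hL : ∑ k ∈ Finset.range (d + 1),
      (2:ℝ)^(k+1) * (2*ρ)^(d-k) * (d.choose k : ℝ) * Real.exp (-(2*ρ)/2) = A * E^2 := by
    rw [hA, Finset.sum_mul]
    exact Finset.sum_congr rfl fun k _ => by rw [hexp]
  have hR : ∑ k ∈ Finset.range (d + 1),
      (2:ℝ)^(k+1) * ρ^(d-k) * (d.choose k : ℝ) * Real.exp (-ρ/2) = S * E := by
    rw [hS, Finset.sum_mul]
  rw [hL, hR]
  -- bound A
  have hAbound : A ≤ 2^(2*d+1) * ρ^d := by
    have h1 : A ≤ ∑ k ∈ Finset.range (d + 1), (2:ℝ)^(d+1) * ρ^d * (d.choose k : ℝ) := by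
      apply Finset.sum_le_sum
      intro k hk
      have hk' : k ≤ d := by simpa [Nat.lt_succ_iff] using Finset.mem_range.mp hk
      have h2 : (2*ρ)^(d-k) = 2^(d-k) * ρ^(d-k) := mul_pow 2 ρ (d-k)
      have h3 : (2:ℝ)^(k+1) * 2^(d-k) = 2^(d+1) := by
        rw [← pow_add]; congr 1; omega
      have h4 : ρ^(d-k) ≤ ρ^d := pow_le_pow_right₀ hρ1 (Nat.sub_le d k)
      calc (2:ℝ)^(k+1) * (2*ρ)^(d-k) * (d.choose k : ℝ)
          = 2^(d+1) * ρ^(d-k) * (d.choose k : ℝ) := by rw [h2, ← mul_assoc, ← h3]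
        _ ≤ 2^(d+1) * ρ^d * (d.choose k : ℝ) := by
            apply mul_le_mul_of_nonneg_right _ (Nat.cast_nonneg _)
            exact mul_le_mul_of_nonneg_left h4 (by positivity)
    have h5 : ∑ k ∈ Finset.range (d + 1), (2:ℝ)^(d+1) * ρ^d * (d.choose k : ℝ)
        = 2^(2*d+1) * ρ^d := by
      rw [← Finset.mul_sum]
      have : ∑ k ∈ Finset.range (d + 1), ((d.choose k : ℝ)) = 2^d := by
        rw [← Nat.cast_sum]
        norm_cast
        exact Nat.sum_range_choose d
      rw [this, show (2:ℝ)^(2*d+1) = 2^(d+1)*2^d from by rw [← pow_add]; congr 1; omega]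
      ring
    linarith
  -- bound S from below
  have hSbound : 2 * ρ^d ≤ S := by
    have h0 : (2:ℝ)^(0+1) * ρ^(d-0) * (d.choose 0 : ℝ) = 2 * ρ^d := by simp
    calc 2 * ρ^d = (2:ℝ)^(0+1) * ρ^(d-0) * (d.choose 0 : ℝ) := h0.symm
      _ ≤ S := Finset.single_le_sum (f := fun k => (2:ℝ)^(k+1) * ρ^(d-k) * (d.choose k : ℝ))
          (fun i _ => by positivity) (Finset.mem_range.mpr (by omega))
  -- combine
  have hρd : (2:ℝ)^d ≤ ρ^d := pow_le_pow_left₀ (by norm_num) hρ d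
  have key : (2:ℝ)^d * A ≤ (2:ℝ)^(2*d) * S^2 := by
    have hS2 : (2*ρ^d)^2 ≤ S^2 := by
      apply pow_le_pow_left₀ (by positivity) hSbound
    have h6 : (2:ℝ)^d * A ≤ 2^d * (2^(2*d+1) * ρ^d) :=
      mul_le_mul_of_nonneg_left hAbound (by positivity)
    have h7 : (2:ℝ)^(2*d) * (2*ρ^d)^2 ≤ 2^(2*d) * S^2 :=
      mul_le_mul_of_nonneg_left hS2 (by positivity)
    have h8 : (2:ℝ)^d * (2^(2*d+1) * ρ^d) ≤ 2^(2*d) * (2*ρ^d)^2 := by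
      have : (2:ℝ)^d * (2^(2*d+1) * ρ^d) = 2^(3*d+1) * ρ^d := by
        rw [← mul_assoc, ← pow_add]; ring_nf
      rw [this]
      have h9 : (2:ℝ)^(2*d) * (2*ρ^d)^2 = 2^(2*d+2) * (ρ^d)^2 := by
        rw [mul_pow, ← mul_assoc, ← pow_add]
      rw [h9]
      have hρdpos : (0:ℝ) < ρ^d := by positivity
      have h10 : (2:ℝ)^(3*d+1) ≤ 2^(2*d+2) * ρ^d := by
        calc (2:ℝ)^(3*d+1) = 2^(2*d+2) * 2^(d-1) := by rw [← pow_add]; congr 1; omega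
          _ ≤ 2^(2*d+2) * 2^d := by
              apply mul_le_mul_of_nonneg_left _ (by positivity)
              exact pow_le_pow_right₀ (by norm_num) (Nat.sub_le d 1)
          _ ≤ 2^(2*d+2) * ρ^d := mul_le_mul_of_nonneg_left hρd (by positivity)
      calc (2:ℝ)^(3*d+1) * ρ^d ≤ 2^(2*d+2) * ρ^d * ρ^d :=
            mul_le_mul_of_nonneg_right h10 (le_of_lt hρdpos)
        _ = 2^(2*d+2) * (ρ^d)^2 := by ring
      
    linarith
  calc (2:ℝ)^d * (A * E^2) = (2^d * A) * E^2 := by ring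
    _ ≤ (2^(2*d) * S^2) * E^2 := mul_le_mul_of_nonneg_right key (by positivity)
    _ = (2^d * (S * E))^2 := by rw [two_mul, pow_add]; ring
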